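/- Let X be a finite index type, g a Lie algebra, and suppose to every subset P ⊆ X is assigned a Lie subalgebra u(P) of g such that u(P ∪ Q) = Lie(u(P) ∪ u(Q)) for all P, Q, and u is monotone. Let H_δ = Σ_{E ∈ ℰ} H_E with H_E ∈ g 'supported on E'. Assume: (propagating property) for every edge E ∈ ℰ and every nonempty E' ⊆ E, Lie([H_E, u(E')] ∪ u(E')) = u(E); and (infection) C ⊆ X infects (X, ℰ). Assume further that for edges F ⊆ P we have [H_F, u(E')] ⊆ u(P) whenever E' ⊆ P. Then Lie({H_δ} ∪ u(C)) ⊇ u(X); if u(X) is maximal among the relevant subalgebras containing H_δ and u(C), then Lie({H_δ} ∪ u(C)) = u(X). -/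

import Mathlib

/-- Infection spread in a hypergraph. -/
def Spreads {α : Type*} (ℰ : Set (Set α)) (A B : Set α) : Prop :=
  B.Nonempty ∧ ∃ E ∈ ℰ, (E ∩ A).Nonempty ∧ E \ A = B ∧
    ∀ F ∈ ℰ, (F ∩ (E ∩ A)).Nonempty → F = E ∨ F ⊆ A

/-- `C` is an infecting set of the hypergraph `(X, ℰ)`. -/
def Infecting {α : Type*} (X : Set α) (ℰ : Set (Set α)) (C : Set α) : Prop :=
  ∃ (m : ℕ) (P : Fin (m + 1) → Set α), P 0 = C ∧ P (Fin.last m) = X ∧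
    ∀ i : Fin m, P i.castSucc ⊂ P i.succ ∧
      Spreads ℰ (P i.castSucc) (P i.succ \ P i.castSucc)


private lemma sum_lie_aux {L : Type*} [LieRing L] {ι : Type*} (s : Finset ι)
    (f : ι → L) (x : L) : ⁅∑ i ∈ s, f i, x⁆ = ∑ i ∈ s, ⁅f i, x⁆ := by
  classical
  induction s using Finset.induction with
  | empty => simp
  | insert a s h ih => simp [Finset.sum_insert h, add_lie, ih]

/-- Main theorem (abstract form): if the drift `H_δ = Σ_{E ∈ ℰ} H_E` has the
propagating property and `C` infects the hypergraph `(X, ℰ)`, then the Lie algebra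
generated by `H_δ` together with `u(C)` is all of `u(X)`. -/
theorem stmt9 {α : Type*} [Fintype α] {R L : Type*} [CommRing R] [LieRing L]
    [LieAlgebra R L]
    (u : Set α → LieSubalgebra R L)
    (hu_mono : ∀ P Q : Set α, P ⊆ Q → u P ≤ u Q)
    (hu_union : ∀ P Q : Set α,
      u (P ∪ Q) = LieSubalgebra.lieSpan R L ((u P : Set L) ∪ (u Q : Set L)))
    (ℰ : Finset (Set α)) (H : Set α → L) (Hδ : L)
    (hHδ : Hδ = ∑ E ∈ ℰ, H E)
    (hsupp : ∀ F ∈ ℰ, ∀ E' : Set α, F ∩ E' = ∅ → ∀ x ∈ u E', ⁅H F, x⁆ = 0)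
    (hloc : ∀ F ∈ ℰ, ∀ P E' : Set α, F ⊆ P → E' ⊆ P → ∀ x ∈ u E', ⁅H F, x⁆ ∈ u P)
    (hprop : ∀ E ∈ ℰ, ∀ E' : Set α, E' ⊆ E → E'.Nonempty →
      LieSubalgebra.lieSpan R L
        ((fun x => ⁅H E, x⁆) '' (u E' : Set L) ∪ (u E' : Set L)) = u E)
    (C : Set α)
    (hC : Infecting Set.univ {E : Set α | E ∈ ℰ} C)
    (hHδmem : Hδ ∈ u Set.univ) :
    LieSubalgebra.lieSpan R L ({Hδ} ∪ (u C : Set L)) = u Set.univ := by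
  set S := LieSubalgebra.lieSpan R L ({Hδ} ∪ (u C : Set L)) with hS
  have hHδS : Hδ ∈ S := LieSubalgebra.subset_lieSpan (Or.inl rfl)
  apply le_antisymm
  · rw [hS, LieSubalgebra.lieSpan_le]
    rintro x (rfl | hx)
    · exact hHδmem
    · exact hu_mono C Set.univ (Set.subset_univ C) hx
  · obtain ⟨m, P, hP0, hPlast, hstep⟩ := hC
    have key : ∀ i : Fin (m + 1), u (P i) ≤ S := by
      intro i
      induction i using Fin.induction with
      | zero =>
        rw [hP0]
        intro x hx
        exact LieSubalgebra.subset_lieSpan (Or.inr hx)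
      | succ i ih =>
        classical
        obtain ⟨hsub, hne, E, hE, hEA, hEdiff, hFcond⟩ := hstep i
        have hE : E ∈ ℰ := hE
        set A := P i.castSucc with hA
        have hPsucc : P i.succ = A ∪ E := by
          rw [← Set.union_diff_cancel hsub.subset, ← hEdiff, Set.union_diff_self]
        have hbr : ∀ x ∈ u (E ∩ A), ⁅H E, x⁆ ∈ S := by
          intro x hx
          have hxS : x ∈ S := ih (hu_mono _ _ Set.inter_subset_right hx)
          have hδx : ⁅Hδ, x⁆ ∈ S := S.lie_mem hHδS hxS
          have hsum : ⁅Hδ, x⁆ = ∑ F ∈ ℰ, ⁅H F, x⁆ := by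
            rw [hHδ, sum_lie_aux]
          have hrest : ∑ F ∈ ℰ.erase E, ⁅H F, x⁆ ∈ S := by
            apply Submodule.sum_mem S.toSubmodule
            intro F hF
            obtain ⟨hFE, hFℰ⟩ := Finset.mem_erase.mp hF
            by_cases hFi : (F ∩ (E ∩ A)).Nonempty
            · rcases hFcond F hFℰ hFi with h | hFA
              · exact absurd h hFE
              · exact ih (hloc F hFℰ A (E ∩ A) hFA Set.inter_subset_right x hx)
            · rw [hsupp F hFℰ (E ∩ A)
                (Set.not_nonempty_iff_eq_empty.mp hFi) x hx]
              exact S.zero_mem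
          have heq : ⁅H E, x⁆ = ⁅Hδ, x⁆ - ∑ F ∈ ℰ.erase E, ⁅H F, x⁆ := by
            rw [hsum, Finset.sum_erase_eq_sub hE]
            abel
          rw [heq]
          exact S.sub_mem hδx hrest
        have hUE : u E ≤ S := by
          rw [← hprop E hE (E ∩ A) Set.inter_subset_left hEA,
            LieSubalgebra.lieSpan_le]
          rintro y (⟨x, hx, rfl⟩ | hy)
          · exact hbr x hx
          · exact ih (hu_mono _ _ Set.inter_subset_right hy)
        rw [hPsucc, hu_union A E, LieSubalgebra.lieSpan_le]
        rintro y (hy | hy)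
        · exact ih hy
        · exact hUE hy
    have := key (Fin.last m)
    rwa [hPlast] at this
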